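/- Let B be a finitely semi-graded (FSG) ring such that B_0 is a left noetherian domain, and let V be a generating frame of B. Then GGKdim(B) = limsup_{k→∞} log_k(udim V^k); in particular, this value is the same for every generating frame V of B. -/

import Mathlib

set_option linter.unusedSectionVars false
set_option linter.unusedVariables false
set_option maxHeartbeats 1000000
set_option synthInstance.maxHeartbeats 400000

namespace FSGAux

variable {α : Type*} [CompleteLattice α]

/-- `a` is an essential subobject of `b`. -/
def Ess (a b : α) : Prop := a ≤ b ∧ ∀ x, x ≤ b → x ≠ ⊥ → x ⊓ a ≠ ⊥

/-- `u` is uniform. -/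
def Unif (u : α) : Prop := u ≠ ⊥ ∧ ∀ x y, x ≤ u → y ≤ u → x ≠ ⊥ → y ≠ ⊥ → x ⊓ y ≠ ⊥

lemma Ess.trans' {a b c : α} (hab : Ess a b) (hbc : Ess b c) : Ess a c := by
  refine ⟨hab.1.trans hbc.1, fun x hx hxne h => ?_⟩
  have h2 : (x ⊓ b) ⊓ a ≠ ⊥ := hab.2 _ inf_le_right (hbc.2 x hx hxne)
  apply h2
  have hle : (x ⊓ b) ⊓ a ≤ x ⊓ a := inf_le_inf_right a inf_le_left
  rw [h] at hle
  exact le_bot_iff.1 hle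

lemma Ess.mono_left {a b c : α} (h : Ess a c) (hab : a ≤ b) (hbc : b ≤ c) : Ess b c := by
  refine ⟨hbc, fun x hx hxne h0 => ?_⟩
  apply h.2 x hx hxne
  have : x ⊓ a ≤ x ⊓ b := inf_le_inf_left x hab
  rw [h0] at this
  exact le_bot_iff.1 this

variable [IsModularLattice α]

lemma Ess.sup_right {a b c : α} (h : Ess a b) (hbc : Disjoint b c) : Ess (a ⊔ c) (b ⊔ c) := by
  refine ⟨sup_le_sup_right h.1 c, fun x hx hxne h0 => ?_⟩
  have key : (c ⊔ x) ⊓ (a ⊔ c) = c := by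
    rw [sup_inf_assoc_of_le x (le_sup_right : c ≤ a ⊔ c), h0, sup_bot_eq]
  have key' : (x ⊔ c) ⊓ (a ⊔ c) = c := by rw [sup_comm x c]; exact key
  have hYa : ((x ⊔ c) ⊓ b) ⊓ a = ⊥ := by
    have h1 : ((x ⊔ c) ⊓ b) ⊓ a ≤ c :=
      le_trans (le_inf (inf_le_left.trans inf_le_left) (inf_le_right.trans le_sup_left)) key'.le
    have h2 : ((x ⊔ c) ⊓ b) ⊓ a ≤ b := inf_le_left.trans inf_le_right
    exact le_bot_iff.1 ((le_inf h2 h1).trans hbc.le_bot)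
  have hY : (x ⊔ c) ⊓ b = ⊥ := by
    by_contra hY
    exact h.2 _ inf_le_right hY hYa
  have hxc : x ≤ c := by
    have h1 : (c ⊔ b) ⊓ (x ⊔ c) = c := by
      rw [sup_inf_assoc_of_le b (le_sup_right : c ≤ x ⊔ c), inf_comm b (x ⊔ c), hY, sup_bot_eq]
    calc x ≤ (c ⊔ b) ⊓ (x ⊔ c) := le_inf (hx.trans (by rw [sup_comm])) le_sup_left
    _ = c := h1
  apply hxne
  apply le_bot_iff.1
  rw [← h0]
  exact le_inf le_rfl (hxc.trans le_sup_right)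

lemma Ess.sup_sup {a b a' b' : α} (h : Ess a b) (h' : Ess a' b') (hd : Disjoint b b') :
    Ess (a ⊔ a') (b ⊔ b') := by
  have s1 : Ess (a ⊔ a') (b ⊔ a') := h.sup_right (hd.mono_right h'.1)
  have s2 : Ess (a' ⊔ b) (b' ⊔ b) := h'.sup_right hd.symm
  rw [sup_comm a' b, sup_comm b' b] at s2
  exact s1.trans' s2

lemma ess_biSup {n : ℕ} {U A : Fin n → α} (hind : iSupIndep U) (hA : ∀ i, Ess (A i) (U i))
    (s : Finset (Fin n)) : Ess (⨆ i ∈ s, A i) (⨆ i ∈ s, U i) := by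
  classical
  induction s using Finset.induction_on with
  | empty =>
      simp only [Finset.notMem_empty, iSup_false, iSup_bot]
      exact ⟨le_rfl, fun x hx hxne => absurd (le_bot_iff.1 hx) hxne⟩
  | @insert i s hi ih =>
      rw [Finset.iSup_insert, Finset.iSup_insert]
      refine (hA i).sup_sup ih ((hind i).mono_right ?_)
      exact iSup₂_le fun j hj => le_iSup₂ (f := fun j (_ : j ≠ i) => U j) j
        (fun h => hi (h ▸ hj))

lemma ess_top_of_inf_ne_bot {n : ℕ} {U : Fin n → α} (hind : iSupIndep U) (hu : ∀ i, Unif (U i))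
    (hE : Ess (⨆ i, U i) ⊤) {W : α} (hW : ∀ i, W ⊓ U i ≠ ⊥) : Ess W ⊤ := by
  have hA : ∀ i, Ess (W ⊓ U i) (U i) := fun i =>
    ⟨inf_le_right, fun x hx hxne => (hu i).2 x (W ⊓ U i) hx inf_le_right hxne (hW i)⟩
  have h2 := ess_biSup hind hA Finset.univ
  have huniv : ∀ f : Fin n → α, ⨆ i ∈ Finset.univ, f i = ⨆ i, f i := fun f => by
    simp
  rw [huniv, huniv] at h2
  have h3 : Ess (⨆ i, W ⊓ U i) ⊤ := h2.trans' hE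
  exact h3.mono_left (iSup_le fun i => inf_le_left) le_top


lemma biSup_ne_sup_self {n : ℕ} (f : Fin n → α) (p : Fin n) :
    (⨆ j, ⨆ _ : j ≠ p, f j) ⊔ f p = ⨆ j, f j := by
  apply le_antisymm
  · exact sup_le (iSup₂_le fun j _ => le_iSup f j) (le_iSup f p)
  · refine iSup_le fun j => ?_
    by_cases h : j = p
    · subst h; exact le_sup_right
    · exact le_sup_of_le_left (le_iSup₂ (f := fun j (_ : j ≠ p) => f j) j h)

lemma iSup_snoc {n : ℕ} (f : Fin n → α) (x : α) :
    (⨆ j, Fin.snoc f x j) = (⨆ i, f i) ⊔ x := by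
  apply le_antisymm
  · refine iSup_le fun j => ?_
    induction j using Fin.lastCases with
    | last => rw [Fin.snoc_last]; exact le_sup_right
    | cast j' => rw [Fin.snoc_castSucc]; exact le_sup_of_le_left (le_iSup f j')
  · refine sup_le (iSup_le fun i => ?_) ?_
    · refine le_iSup_of_le (Fin.castSucc i) ?_
      rw [Fin.snoc_castSucc]
    · refine le_iSup_of_le (Fin.last n) ?_
      rw [Fin.snoc_last]

lemma iSupIndep_snoc {n : ℕ} {f : Fin n → α} {x : α} (hf : iSupIndep f)
    (hx : Disjoint x (⨆ i, f i)) : iSupIndep (Fin.snoc f x) := by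
  intro i
  induction i using Fin.lastCases with
  | last =>
    rw [Fin.snoc_last]
    have he : (⨆ j, ⨆ _ : j ≠ Fin.last n, Fin.snoc f x j) = ⨆ j : Fin n, f j := by
      apply le_antisymm
      · refine iSup₂_le fun j hj => ?_
        obtain ⟨j', rfl⟩ : ∃ j', Fin.castSucc j' = j :=
          ⟨j.castPred hj, Fin.castSucc_castPred j hj⟩
        rw [Fin.snoc_castSucc]; exact le_iSup f j'
      · refine iSup_le fun j => ?_
        have h := le_iSup₂ (f := fun j (_ : j ≠ Fin.last n) => Fin.snoc f x j) j.castSucc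
          (Fin.castSucc_lt_last j).ne
        rw [Fin.snoc_castSucc] at h; exact h
    rw [he]; exact hx
  | cast i =>
    rw [Fin.snoc_castSucc]
    have hb : (⨆ j, ⨆ _ : j ≠ Fin.castSucc i, Fin.snoc f x j) ≤
        (⨆ j, ⨆ _ : j ≠ i, f j) ⊔ x := by
      refine iSup₂_le fun j hj => ?_
      induction j using Fin.lastCases with
      | last => rw [Fin.snoc_last]; exact le_sup_right
      | cast j' =>
        rw [Fin.snoc_castSucc]
        refine le_sup_of_le_left (le_iSup₂ (f := fun j (_ : j ≠ i) => f j) j' ?_)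
        exact fun h => hj (by rw [h])
    have h1 : Disjoint (f i) (⨆ j, ⨆ _ : j ≠ i, f j) := hf i
    have h2 : Disjoint (f i ⊔ ⨆ j, ⨆ _ : j ≠ i, f j) x := by
      refine hx.symm.mono_left (sup_le (le_iSup f i) (iSup₂_le fun j _ => le_iSup f j))
    exact (h1.disjoint_sup_right_of_disjoint_sup_left h2).mono_right hb

lemma iSupIndep_update {n : ℕ} {h : Fin n → α} {p : Fin n} {u : α} (hh : iSupIndep h)
    (hu : Disjoint u (⨆ q, ⨆ _ : q ≠ p, h q)) : iSupIndep (Function.update h p u) := by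
  classical
  intro q
  rcases eq_or_ne q p with rfl | hqp
  · rw [Function.update_self]
    refine hu.mono_right (iSup₂_le fun r hr => ?_)
    rw [Function.update_of_ne hr]
    exact le_iSup₂ (f := fun r (_ : r ≠ q) => h r) r hr
  · rw [Function.update_of_ne hqp]
    have hb : (⨆ r, ⨆ _ : r ≠ q, Function.update h p u r) ≤
        (⨆ r, ⨆ _ : r ≠ q ∧ r ≠ p, h r) ⊔ u := by
      refine iSup₂_le fun r hr => ?_
      rcases eq_or_ne r p with rfl | hrp
      · rw [Function.update_self]; exact le_sup_right
      · rw [Function.update_of_ne hrp]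
        exact le_sup_of_le_left (le_iSup₂ (f := fun r (_ : r ≠ q ∧ r ≠ p) => h r) r ⟨hr, hrp⟩)
    have h1 : Disjoint (h q) (⨆ r, ⨆ _ : r ≠ q ∧ r ≠ p, h r) :=
      (hh q).mono_right (iSup₂_le fun r hr => le_iSup₂ (f := fun r (_ : r ≠ q) => h r) r hr.1)
    have h2 : Disjoint (h q ⊔ ⨆ r, ⨆ _ : r ≠ q ∧ r ≠ p, h r) u := by
      refine hu.symm.mono_left (sup_le (le_iSup₂ (f := fun r (_ : r ≠ p) => h r) q hqp)
        (iSup₂_le fun r hr => le_iSup₂ (f := fun r (_ : r ≠ p) => h r) r hr.2))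
    exact (h1.disjoint_sup_right_of_disjoint_sup_left h2).mono_right hb

section WF
variable [WellFoundedGT α]

lemma exists_unif_le {a : α} (ha : a ≠ ⊥) : ∃ u, u ≤ a ∧ Unif u := by
  by_contra hcon
  push_neg at hcon
  have H : ∀ b : α, b ≤ a → b ≠ ⊥ →
      ∃ p : α × α, p.1 ≤ b ∧ p.2 ≤ b ∧ p.1 ≠ ⊥ ∧ p.2 ≠ ⊥ ∧ p.1 ⊓ p.2 = ⊥ := by
    intro b hb hbne
    have h1 := hcon b hb
    unfold Unif at h1
    push_neg at h1
    obtain ⟨x, y, hx, hy, hxne, hyne, hxy⟩ := h1 hbne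
    exact ⟨(x, y), hx, hy, hxne, hyne, hxy⟩
  set T := {b : α // b ≤ a ∧ b ≠ ⊥} with hT
  have next : ∀ b : T, ∃ p : α × α,
      p.1 ≤ b.1 ∧ p.2 ≤ b.1 ∧ p.1 ≠ ⊥ ∧ p.2 ≠ ⊥ ∧ p.1 ⊓ p.2 = ⊥ :=
    fun b => H b.1 b.2.1 b.2.2
  choose P hP1 hP2 hP3 hP4 hP5 using next
  let step : T → T := fun b => ⟨(P b).2, (hP2 b).trans b.2.1, hP4 b⟩
  let seq : ℕ → T := fun n => Nat.rec (⟨a, le_rfl, ha⟩ : T) (fun _ b => step b) n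
  have hseq : ∀ n, seq (n + 1) = step (seq n) := fun n => rfl
  set A : ℕ → α := fun n => (P (seq n)).1 with hA
  set Bs : ℕ → α := fun n => (seq n).1 with hB
  have hBs : ∀ n, Bs (n + 1) = (P (seq n)).2 := fun n => rfl
  have hAB : ∀ n, A n ≤ Bs n := fun n => hP1 (seq n)
  have hBB : ∀ n, Bs (n + 1) ≤ Bs n := fun n => hP2 (seq n)
  have hAne : ∀ n, A n ≠ ⊥ := fun n => hP3 (seq n)
  have hABd : ∀ n, A n ⊓ Bs (n + 1) = ⊥ := fun n => hP5 (seq n)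
  set S : ℕ → α := fun n => ⨆ i ∈ Finset.range n, A i with hS
  have hSsucc : ∀ n, S (n + 1) = S n ⊔ A n := by
    intro n
    rw [hS]
    simp only [Finset.range_add_one, Finset.iSup_insert]
    rw [sup_comm]
  have hSB : ∀ n, S n ⊓ Bs n = ⊥ := by
    intro n
    induction n with
    | zero =>
        simp [hS]
    | succ n ih =>
        have h1 : (S n ⊔ A n) ⊓ Bs n = A n := by
          rw [sup_comm (S n) (A n), sup_inf_assoc_of_le (S n) (hAB n), ih, sup_bot_eq]
        have h2 : S (n + 1) ⊓ Bs (n + 1) = ((S n ⊔ A n) ⊓ Bs n) ⊓ Bs (n + 1) := by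
          rw [hSsucc n, inf_assoc, inf_eq_right.2 (hBB n)]
        rw [h2, h1, hABd n]
  have hstrict : StrictMono S := by
    have hmono : Monotone S := fun i j hij => by
      refine iSup_le fun t => iSup_le fun ht => ?_
      exact le_iSup₂ (f := fun t (_ : t ∈ Finset.range j) => A t) t
        (Finset.mem_range.2 ((Finset.mem_range.1 ht).trans_le hij))
    refine strictMono_nat_of_lt_succ fun n => ?_
    refine lt_of_le_of_ne (hmono (Nat.le_succ n)) fun he => ?_
    have hAS : A n ≤ S n := by
      rw [he, hSsucc n]; exact le_sup_right
    exact hAne n (le_bot_iff.1 ((le_inf hAS (hAB n)).trans (hSB n).le))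
  obtain ⟨N, hN⟩ := wellFoundedGT_iff_monotone_chain_condition.1
    ⟨(IsWellFounded.wf : WellFounded ((· > ·) : α → α → Prop))⟩ ⟨S, hstrict.monotone⟩
  exact absurd (hN (N + 1) (Nat.le_succ N)) (hstrict (Nat.lt_succ_self N)).ne

lemma exists_unif_decomp :
    ∃ (n : ℕ) (U : Fin n → α), iSupIndep U ∧ (∀ i, Unif (U i)) ∧ Ess (⨆ i, U i) ⊤ := by
  have hne : ({x : α | ∃ (n : ℕ) (U : Fin n → α),
      iSupIndep U ∧ (∀ i, Unif (U i)) ∧ x = ⨆ i, U i}).Nonempty := by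
    refine ⟨⊥, 0, Fin.elim0, fun i => i.elim0, fun i => i.elim0, ?_⟩
    rw [iSup_of_empty]
  obtain ⟨x, ⟨n, U, hind, hunif, rfl⟩, hmax⟩ :=
    (IsWellFounded.wf : WellFounded ((· > ·) : α → α → Prop)).has_min _ hne
  refine ⟨n, U, hind, hunif, le_top, fun x hx hxne h0 => ?_⟩
  obtain ⟨u, hu_le, hu⟩ := exists_unif_le hxne
  have hdisj : Disjoint u (⨆ i, U i) := by
    rw [disjoint_iff]
    have : u ⊓ ⨆ i, U i ≤ x ⊓ ⨆ i, U i := inf_le_inf_right _ hu_le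
    rw [h0] at this
    exact le_bot_iff.1 this
  have hmem : ((⨆ i, U i) ⊔ u) ∈ {x : α | ∃ (n : ℕ) (U : Fin n → α),
      iSupIndep U ∧ (∀ i, Unif (U i)) ∧ x = ⨆ i, U i} := by
    refine ⟨n + 1, Fin.snoc U u, iSupIndep_snoc hind hdisj, ?_, (iSup_snoc U u).symm⟩
    intro i
    induction i using Fin.lastCases with
    | last => rw [Fin.snoc_last]; exact hu
    | cast i => rw [Fin.snoc_castSucc]; exact hunif i
  refine hmax _ hmem (lt_of_le_of_ne le_sup_left fun he => ?_)
  have hule : u ≤ ⨆ i, U i := le_sup_right.trans he.symm.le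
  exact hu.1 (le_bot_iff.1 ((le_inf le_rfl hule).trans hdisj.le_bot))


lemma unif_inf_biInf {u : α} (hu : Unif u) {ι : Type*} {T : Finset ι} (hT : T.Nonempty)
    {d : ι → α} (hd : ∀ i ∈ T, u ⊓ d i ≠ ⊥) : u ⊓ (⨅ i ∈ T, d i) ≠ ⊥ := by
  classical
  induction hT using Finset.Nonempty.cons_induction with
  | singleton a => simpa using hd a (Finset.mem_singleton_self a)
  | cons a s ha hs ih =>
      rw [Finset.cons_eq_insert, Finset.iInf_insert]
      have h1 : u ⊓ d a ≠ ⊥ := hd a (by simp)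
      have h2 : u ⊓ ⨅ i ∈ s, d i ≠ ⊥ := ih fun i hi => hd i (by simp [hi])
      have h3 := hu.2 _ _ inf_le_left inf_le_left h1 h2
      intro h0
      apply h3
      apply le_bot_iff.1
      rw [← h0]
      exact le_inf (inf_le_left.trans inf_le_left)
        (le_inf (inf_le_left.trans inf_le_right) (inf_le_right.trans inf_le_right))

lemma biInf_cohyper {n : ℕ} {h : Fin n → α} (hh : iSupIndep h) {S : Finset (Fin n)}
    (hS : S.Nonempty) :
    (⨅ p ∈ S, ⨆ q, ⨆ _ : q ≠ p, h q) = ⨆ q ∈ Sᶜ, h q := by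
  classical
  induction hS using Finset.Nonempty.cons_induction with
  | singleton a =>
      simp only [Finset.iInf_singleton]
      apply le_antisymm
      · exact iSup₂_le fun q hq =>
          le_iSup₂ (f := fun q (_ : q ∈ ({a} : Finset (Fin n))ᶜ) => h q) q
            (Finset.mem_compl.2 (by simpa using hq))
      · exact iSup₂_le fun q hq =>
          le_iSup₂ (f := fun q (_ : q ≠ a) => h q) q (by simpa using Finset.mem_compl.1 hq)
  | cons a s ha hs ih =>
      rw [Finset.cons_eq_insert, Finset.iInf_insert, ih]
      have hmem : a ∈ sᶜ := Finset.mem_compl.2 ha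
      have hsplit : (⨆ q ∈ sᶜ, h q) = h a ⊔ ⨆ q ∈ (insert a s)ᶜ, h q := by
        rw [Finset.compl_insert]
        conv_lhs => rw [← Finset.insert_erase hmem]
        rw [Finset.iSup_insert]
      rw [hsplit]
      have hA : (⨆ q ∈ (insert a s)ᶜ, h q) ≤ ⨆ q, ⨆ _ : q ≠ a, h q := by
        refine iSup₂_le fun q hq => le_iSup₂ (f := fun q (_ : q ≠ a) => h q) q ?_
        rw [Finset.compl_insert, Finset.mem_erase] at hq; exact hq.1
      rw [inf_comm, sup_comm (h a) _, sup_inf_assoc_of_le (h a) hA,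
        disjoint_iff.1 (hh a), sup_bot_eq]

section WF2
variable [WellFoundedGT α]

theorem card_le_of_indep {n : ℕ} {U : Fin n → α} (hU : iSupIndep U) (hu : ∀ i, Unif (U i))
    (hE : Ess (⨆ i, U i) ⊤) {m : ℕ} {g : Fin m → α} (hg0 : ∀ j, g j ≠ ⊥)
    (hg : iSupIndep g) : m ≤ n := by
  classical
  have hex : ∀ j, ∃ u, u ≤ g j ∧ Unif u := fun j => exists_unif_le (hg0 j)
  choose g' hle hunif' using hex
  have hg' : iSupIndep g' := hg.mono hle
  suffices H : ∀ t (ht : t ≤ m), ∃ (h : Fin n → α) (φ : Fin t → Fin n),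
      Function.Injective φ ∧ iSupIndep h ∧ (∀ q, Unif (h q)) ∧ Ess (⨆ q, h q) ⊤ ∧
      ∀ j : Fin t, h (φ j) = g' ⟨j.1, lt_of_lt_of_le j.2 ht⟩ by
    obtain ⟨h, φ, hinj, -⟩ := H m le_rfl
    simpa using Fintype.card_le_of_injective φ hinj
  intro t
  induction t with
  | zero =>
      exact fun _ => ⟨U, Fin.elim0, fun a => a.elim0, hU, hu, hE, fun j => j.elim0⟩
  | succ t ih =>
      intro ht
      obtain ⟨h, φ, hinj, hhind, hhunif, hhE, hco⟩ := ih (Nat.le_of_succ_le ht)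
      have htm : t < m := ht
      set gt : α := g' ⟨t, htm⟩ with hgt
      have hgtne : gt ≠ ⊥ := (hunif' _).1
      set R : Finset (Fin n) := (Finset.univ.image φ)ᶜ with hR
      have hRc : ∀ q ∈ Rᶜ, ∃ j : Fin t, φ j = q := by
        intro q hq
        rw [hR, compl_compl] at hq
        obtain ⟨j, -, rfl⟩ := Finset.mem_image.1 hq
        exact ⟨j, rfl⟩
      have hd0 : Disjoint gt (⨆ q ∈ Rᶜ, h q) := by
        refine (hg' ⟨t, htm⟩).mono_right ?_
        refine iSup₂_le fun q hq => ?_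
        obtain ⟨j, rfl⟩ := hRc q hq
        rw [hco j]
        refine le_iSup₂ (f := fun r (_ : r ≠ (⟨t, htm⟩ : Fin m)) => g' r) _ ?_
        intro hcontra
        have hval : (j : ℕ) = t := congrArg Fin.val hcontra
        have hlt : (j : ℕ) < t := j.2
        rw [hval] at hlt
        exact lt_irrefl t hlt
      have hRne : R.Nonempty := by
        rw [Finset.nonempty_iff_ne_empty]
        intro h0
        have hcompl : Rᶜ = Finset.univ := by rw [h0, Finset.compl_empty]
        have huniv : (⨆ q ∈ Rᶜ, h q) = ⨆ q, h q := by rw [hcompl]; simp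
        have hdisj : Disjoint gt (⨆ q, h q) := by rw [← huniv]; exact hd0
        exact hhE.2 gt le_top hgtne (disjoint_iff.1 hdisj)
      have hfind : ∃ p ∈ R, Disjoint gt (⨆ q, ⨆ _ : q ≠ p, h q) := by
        by_contra hnone
        push_neg at hnone
        have hd : ∀ p ∈ R, gt ⊓ (⨆ q, ⨆ _ : q ≠ p, h q) ≠ ⊥ := fun p hp h0 =>
          hnone p hp (disjoint_iff.2 h0)
        have h1 := unif_inf_biInf (hunif' ⟨t, htm⟩) hRne hd
        rw [biInf_cohyper hhind hRne] at h1
        exact h1 (disjoint_iff.1 hd0)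
      obtain ⟨p, hpR, hpd⟩ := hfind
      have hpnotin : ∀ j : Fin t, φ j ≠ p := by
        intro j hj
        rw [hR, Finset.mem_compl] at hpR
        exact hpR (hj ▸ Finset.mem_image_of_mem φ (Finset.mem_univ j))
      set h' : Fin n → α := Function.update h p gt with hh'
      have hh'ind : iSupIndep h' := iSupIndep_update hhind hpd
      have hh'unif : ∀ q, Unif (h' q) := by
        intro q
        rcases eq_or_ne q p with rfl | hq
        · rw [hh', Function.update_self]; exact hunif' _
        · rw [hh', Function.update_of_ne hq]; exact hhunif q
      have hsup_h' : ∀ q, q ≠ p → h q ≤ ⨆ r, h' r := by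
        intro q hq
        have he : h q = h' q := (Function.update_of_ne hq gt h).symm
        rw [he]; exact le_iSup h' q
      have hWp : (⨆ r, h' r) ⊓ h p ≠ ⊥ := by
        intro h0
        have hdisj : Disjoint (h p) (⨆ r, h' r) := disjoint_iff.2 (by rwa [inf_comm] at h0)
        have hext : iSupIndep (Fin.snoc h' (h p)) := iSupIndep_snoc hh'ind hdisj
        have hgt_le : Disjoint gt (⨆ q, h q) := by
          have h1 := hext (Fin.castSucc p)
          rw [Fin.snoc_castSucc] at h1
          have h2 : h' p = gt := Function.update_self p gt h
          rw [h2] at h1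
          refine h1.mono_right ?_
          refine iSup_le fun q => ?_
          rcases eq_or_ne q p with rfl | hq
          · refine le_trans ?_ (le_iSup₂
              (f := fun j (_ : j ≠ Fin.castSucc q) => Fin.snoc h' (h q) j) (Fin.last n) ?_)
            · rw [Fin.snoc_last]
            · exact (Fin.castSucc_lt_last q).ne'
          · refine le_trans ?_ (le_iSup₂
              (f := fun j (_ : j ≠ Fin.castSucc p) => Fin.snoc h' (h p) j) (Fin.castSucc q) ?_)
            · rw [Fin.snoc_castSucc, hh', Function.update_of_ne hq]
            · exact fun hc => hq (Fin.castSucc_injective n hc)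
        exact hhE.2 gt le_top hgtne (disjoint_iff.1 hgt_le)
      have hh'E : Ess (⨆ r, h' r) ⊤ := by
        refine ess_top_of_inf_ne_bot hhind hhunif hhE fun q => ?_
        rcases eq_or_ne q p with rfl | hq
        · exact hWp
        · intro h0
          apply (hhunif q).1
          apply le_bot_iff.1
          rw [← h0]
          exact le_inf (hsup_h' q hq) le_rfl
      refine ⟨h', Fin.snoc φ p, ?_, hh'ind, hh'unif, hh'E, ?_⟩
      · intro a b hab
        induction a using Fin.lastCases with
        | last =>
          induction b using Fin.lastCases with
          | last => rfl
          | cast b' =>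
              rw [Fin.snoc_last, Fin.snoc_castSucc] at hab
              exact absurd hab.symm (hpnotin b')
        | cast a' =>
          induction b using Fin.lastCases with
          | last =>
              rw [Fin.snoc_last, Fin.snoc_castSucc] at hab
              exact absurd hab (hpnotin a')
          | cast b' =>
              rw [Fin.snoc_castSucc, Fin.snoc_castSucc] at hab
              rw [hinj hab]
      · intro j
        induction j using Fin.lastCases with
        | last =>
            rw [Fin.snoc_last, hh', Function.update_self]
            exact congrArg g' (Fin.ext rfl)
        | cast j' =>
            rw [Fin.snoc_castSucc, hh', Function.update_of_ne (hpnotin j'), hco j']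
            exact congrArg g' (Fin.ext rfl)

theorem exists_indep_bound :
    ∃ n : ℕ, ∀ (m : ℕ) (g : Fin m → α), (∀ j, g j ≠ ⊥) → iSupIndep g → m ≤ n := by
  obtain ⟨n, U, h1, h2, h3⟩ := exists_unif_decomp (α := α)
  exact ⟨n, fun m g hg0 hg => card_le_of_indep h1 h2 h3 hg0 hg⟩

end WF2
end WF
end FSGAux




open scoped DirectSum

/-- A ring `B` is *semi-graded (SG)*. -/
structure SemiGraded (B : Type*) [Ring B] where
  comp : ℕ → AddSubgroup B
  internal : DirectSum.IsInternal comp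
  mul_mem : ∀ m n : ℕ, ∀ a ∈ comp m, ∀ b ∈ comp n, a * b ∈ ⨆ k ∈ Set.Iic (m + n), comp k
  one_mem' : 1 ∈ comp 0

/-- `v : Fin k → B` is a basis of the free left `B_0`-module `B_n`. -/
def SemiGraded.IsComp0Basis {B : Type*} [Ring B] (SG : SemiGraded B) (n : ℕ) {k : ℕ}
    (v : Fin k → B) : Prop :=
  (∀ i, v i ∈ SG.comp n) ∧
  ∀ b ∈ SG.comp n, ∃! c : Fin k → B, (∀ i, c i ∈ SG.comp 0) ∧ b = ∑ i, c i * v i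

/-- A *finitely semi-graded (FSG)* ring. -/
structure FinitelySemiGraded (B : Type*) [Ring B] extends SemiGraded B where
  fin_gen : ∃ s : Finset B, Subring.closure ((comp 0 : Set B) ∪ s) = ⊤
  free : ∀ n : ℕ, ∃ (k : ℕ) (v : Fin k → B), toSemiGraded.IsComp0Basis n v

variable {B : Type*} [Ring B]

/-- An additive subgroup of `B` which is stable under left multiplication by `B_0`,
i.e. a left `B_0`-submodule of `B`. -/
def SemiGraded.IsB0Stable (SG : SemiGraded B) (W : AddSubgroup B) : Prop :=
  ∀ c ∈ SG.comp 0, ∀ w ∈ W, c * w ∈ W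

/-- The left `B_0`-submodule of `B` generated by a set `s`. -/
def SemiGraded.b0Span (SG : SemiGraded B) (s : Set B) : AddSubgroup B :=
  AddSubgroup.closure {y : B | ∃ c ∈ SG.comp 0, ∃ w ∈ s, y = c * w}

/-- The tuple `v` spans a *frame* of `B`: a finitely generated free left `B_0`-submodule
`V ⊆ B` with basis `v` and `1 ∈ V`. -/
def SemiGraded.IsFrame (SG : SemiGraded B) {k : ℕ} (v : Fin k → B) : Prop :=
  (∀ c c' : Fin k → B, (∀ i, c i ∈ SG.comp 0) → (∀ i, c' i ∈ SG.comp 0) →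
    ∑ i, c i * v i = ∑ i, c' i * v i → c = c') ∧
  (1 : B) ∈ SG.b0Span (Set.range v)

/-- `V^m`: the left `B_0`-submodule of `B` generated by all products of `m` elements
of the frame `V` spanned by `v`. -/
def SemiGraded.framePow (SG : SemiGraded B) {k : ℕ} (v : Fin k → B) (m : ℕ) :
    AddSubgroup B :=
  SG.b0Span {y : B | ∃ w : Fin m → B,
    (∀ j, w j ∈ SG.b0Span (Set.range v)) ∧ y = (List.ofFn w).prod}

/-- The uniform (Goldie) dimension of a left `B_0`-submodule `W` of `B`: the supremum of
the integers `m` such that `W` contains a direct sum of `m` nonzero `B_0`-submodules. -/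
noncomputable def SemiGraded.udim (SG : SemiGraded B) (W : AddSubgroup B) : ℕ :=
  sSup {m : ℕ | ∃ f : Fin m → AddSubgroup B, (∀ i, f i ≠ ⊥) ∧ (∀ i, f i ≤ W) ∧
    (∀ i, SG.IsB0Stable (f i)) ∧ iSupIndep f}

/-- The generalized Gelfand-Kirillov dimension
`GGKdim(B) = sup_V limsup_{m→∞} log_m (udim V^m)`, the supremum over all frames `V`. -/
noncomputable def SemiGraded.GGKdim (SG : SemiGraded B) : EReal :=
  ⨆ (k : ℕ) (v : Fin k → B) (_ : SG.IsFrame v),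
    Filter.limsup (fun m : ℕ => ((Real.logb m (SG.udim (SG.framePow v m)) : ℝ) : EReal))
      Filter.atTop


namespace FSGAux
section Bridge
variable {B : Type*} [Ring B] (SG : SemiGraded B)

lemma comp0_mul_mem {a b : B} (ha : a ∈ SG.comp 0) (hb : b ∈ SG.comp 0) :
    a * b ∈ SG.comp 0 := by
  have h := SG.mul_mem 0 0 a ha b hb
  have he : (⨆ k ∈ Set.Iic (0 + 0), SG.comp k) = SG.comp 0 := by
    apply le_antisymm
    · refine iSup₂_le fun k hk => ?_
      have hk0 : k = 0 := Nat.le_zero.1 hk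
      rw [hk0]
    · exact le_iSup₂ (f := fun k (_ : k ∈ Set.Iic (0 + 0)) => SG.comp k) 0 (by simp)
  rwa [he] at h

/-- The subring `B₀`. -/
def R0 : Subring B :=
  { carrier := SG.comp 0
    one_mem' := SG.one_mem'
    mul_mem' := fun ha hb => comp0_mul_mem SG ha hb
    add_mem' := fun ha hb => (SG.comp 0).add_mem ha hb
    zero_mem' := (SG.comp 0).zero_mem
    neg_mem' := fun ha => (SG.comp 0).neg_mem ha }

lemma mem_R0 {x : B} : x ∈ R0 SG ↔ x ∈ SG.comp 0 := Iff.rfl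

/-- A stable additive subgroup as a submodule over `B₀`. -/
def toSubmodule (W : AddSubgroup B) (hW : SG.IsB0Stable W) : Submodule (R0 SG) B :=
  { carrier := W
    add_mem' := fun ha hb => W.add_mem ha hb
    zero_mem' := W.zero_mem
    smul_mem' := fun c x hx => hW c.1 c.2 x hx }

lemma mem_toSubmodule {W : AddSubgroup B} {hW : SG.IsB0Stable W} {x : B} :
    x ∈ toSubmodule SG W hW ↔ x ∈ W := Iff.rfl

lemma isB0Stable_b0Span (s : Set B) : SG.IsB0Stable (SG.b0Span s) := by
  intro c hc w hw
  induction hw using AddSubgroup.closure_induction with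
  | mem x hx =>
      obtain ⟨c', hc', w', hw', rfl⟩ := hx
      exact AddSubgroup.subset_closure
        ⟨c * c', comp0_mul_mem SG hc hc', w', hw', (mul_assoc c c' w').symm⟩
  | zero => rw [mul_zero]; exact zero_mem _
  | add x y hx hy ihx ihy => rw [mul_add]; exact add_mem ihx ihy
  | neg x hx ih => rw [mul_neg]; exact neg_mem ih

lemma subset_b0Span (s : Set B) : s ⊆ SG.b0Span s := fun w hw =>
  AddSubgroup.subset_closure ⟨1, SG.one_mem', w, hw, (one_mul w).symm⟩

lemma b0Span_le {s : Set B} {W : AddSubgroup B} (hW : SG.IsB0Stable W) (h : s ⊆ W) :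
    SG.b0Span s ≤ W := by
  refine (AddSubgroup.closure_le W).2 ?_
  rintro y ⟨c, hc, w, hw, rfl⟩
  exact hW c hc w (h hw)

lemma isB0Stable_iSup {ι : Sort*} {f : ι → AddSubgroup B} (hf : ∀ i, SG.IsB0Stable (f i)) :
    SG.IsB0Stable (⨆ i, f i) := by
  intro c hc w hw
  refine AddSubgroup.iSup_induction (C := fun w => c * w ∈ ⨆ i, f i) f hw
    (fun i x hx => ?_) ?_ (fun x y hx hy => ?_)
  · exact AddSubgroup.mem_iSup_of_mem i (hf i c hc x hx)
  · show c * 0 ∈ ⨆ i, f i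
    rw [mul_zero]; exact zero_mem _
  · show c * (x + y) ∈ ⨆ i, f i
    rw [mul_add]; exact add_mem hx hy


lemma mem_iSup_iff {ι : Sort*} (f : ι → AddSubgroup B) (hf : ∀ i, SG.IsB0Stable (f i)) (x : B) :
    x ∈ (⨆ i, toSubmodule SG (f i) (hf i)) ↔ x ∈ (⨆ i, f i) := by
  constructor
  · intro hx
    have hle : (⨆ i, toSubmodule SG (f i) (hf i)) ≤
        toSubmodule SG (⨆ i, f i) (isB0Stable_iSup SG hf) :=
      iSup_le fun i => fun y hy => (le_iSup f i : f i ≤ ⨆ i, f i) hy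
    exact hle hx
  · intro hx
    refine AddSubgroup.iSup_induction (C := fun y => y ∈ ⨆ i, toSubmodule SG (f i) (hf i)) f hx
      (fun i y hy => ?_) (zero_mem _) (fun a b ha hb => add_mem ha hb)
    exact (le_iSup (fun i => toSubmodule SG (f i) (hf i)) i : _ ≤ _) hy

lemma mem_biSup_iff {m : ℕ} (f : Fin m → AddSubgroup B) (hst : ∀ j, SG.IsB0Stable (f j))
    (i : Fin m) (x : B) :
    x ∈ (⨆ j, ⨆ _ : j ≠ i, toSubmodule SG (f j) (hst j)) ↔
      x ∈ (⨆ j, ⨆ _ : j ≠ i, f j) := by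
  rw [iSup_subtype', iSup_subtype']
  exact mem_iSup_iff SG (fun j : {j // j ≠ i} => f j.1) (fun j => hst j.1) x

lemma indep_toSubmodule {m : ℕ} (f : Fin m → AddSubgroup B) (hst : ∀ i, SG.IsB0Stable (f i))
    (hind : iSupIndep f) : iSupIndep (fun i => toSubmodule SG (f i) (hst i)) := by
  intro i
  rw [disjoint_iff, eq_bot_iff]
  intro x hx
  have hx1 : x ∈ f i := (Submodule.mem_inf.1 hx).1
  have hx2 : x ∈ (⨆ j, ⨆ _ : j ≠ i, f j) :=
    (mem_biSup_iff SG f hst i x).1 (Submodule.mem_inf.1 hx).2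
  have : x ∈ f i ⊓ ⨆ j, ⨆ _ : j ≠ i, f j := ⟨hx1, hx2⟩
  rw [disjoint_iff.1 (hind i)] at this
  simpa using this

lemma isNoetherianRing_R0
    (hnoeth : ∀ c : ℕ →o AddSubgroup B,
      (∀ m, c m ≤ SG.comp 0 ∧ SG.IsB0Stable (c m)) → ∃ N, ∀ m, N ≤ m → c m = c N) :
    IsNoetherianRing (R0 SG) := by
  rw [isNoetherianRing_iff, ← monotone_stabilizes_iff_noetherian]
  intro f
  set e : Submodule (R0 SG) (R0 SG) → AddSubgroup B := fun I =>
    AddSubgroup.map (R0 SG).subtype.toAddMonoidHom I.toAddSubgroup with he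
  have hmem : ∀ (I : Submodule (R0 SG) (R0 SG)) (y : R0 SG), (y : B) ∈ e I ↔ y ∈ I := by
    intro I y
    constructor
    · rintro ⟨z, hz, hzy⟩
      have : z = y := Subtype.ext hzy
      rwa [← this]
    · intro hy
      exact ⟨y, hy, rfl⟩
  have hchain : ∀ m, e (f m) ≤ SG.comp 0 ∧ SG.IsB0Stable (e (f m)) := by
    intro m
    constructor
    · rintro x ⟨z, hz, rfl⟩
      exact z.2
    · rintro c hc x ⟨z, hz, rfl⟩
      refine ⟨(⟨c, hc⟩ : R0 SG) * z, ?_, rfl⟩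
      exact (f m).smul_mem (⟨c, hc⟩ : R0 SG) hz
  have hmono : Monotone fun m => e (f m) := by
    intro a b hab
    rintro x ⟨z, hz, rfl⟩
    exact ⟨z, f.monotone hab hz, rfl⟩
  obtain ⟨N, hN⟩ := hnoeth ⟨fun m => e (f m), hmono⟩ hchain
  refine ⟨N, fun m hm => ?_⟩
  ext y
  rw [← hmem (f N) y, ← hmem (f m) y]
  have := hN m hm
  simp only [OrderHom.coe_mk] at this
  rw [this]

/-- The set appearing in the definition of `udim`. -/
def Sset (W : AddSubgroup B) : Set ℕ :=
  {m : ℕ | ∃ f : Fin m → AddSubgroup B, (∀ i, f i ≠ ⊥) ∧ (∀ i, f i ≤ W) ∧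
    (∀ i, SG.IsB0Stable (f i)) ∧ iSupIndep f}

lemma udim_eq_sSup_Sset (W : AddSubgroup B) : SG.udim W = sSup (Sset SG W) := rfl

lemma zero_mem_Sset (W : AddSubgroup B) : 0 ∈ Sset SG W :=
  ⟨Fin.elim0, fun i => i.elim0, fun i => i.elim0, fun i => i.elim0, fun i => i.elim0⟩

lemma bddAbove_Sset
    (hnoeth : ∀ c : ℕ →o AddSubgroup B,
      (∀ m, c m ≤ SG.comp 0 ∧ SG.IsB0Stable (c m)) → ∃ N, ∀ m, N ≤ m → c m = c N)
    {s : Set B} (hs : s.Finite) {P : AddSubgroup B}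
    (hP : (P : Set B) ⊆ (Submodule.span (R0 SG) s : Set B)) :
    BddAbove (Sset SG P) := by
  classical
  haveI hnr : IsNoetherianRing (R0 SG) := isNoetherianRing_R0 SG hnoeth
  set Q : Submodule (R0 SG) B := Submodule.span (R0 SG) s with hQ
  haveI hQnoeth : IsNoetherian (R0 SG) Q := isNoetherian_of_fg_of_noetherian Q (Submodule.fg_span hs)
  haveI : WellFoundedGT (Submodule (R0 SG) Q) := ⟨isNoetherian_iff.1 hQnoeth⟩
  obtain ⟨n, hn⟩ := exists_indep_bound (α := Submodule (R0 SG) Q)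
  refine ⟨n, fun m hm => ?_⟩
  obtain ⟨f, hne, hle, hst, hind⟩ := hm
  set N : Fin m → Submodule (R0 SG) B := fun i => toSubmodule SG (f i) (hst i) with hNdef
  have hNle : ∀ i, N i ≤ Q := fun i x hx => hP (hle i hx)
  have hNind : iSupIndep N := indep_toSubmodule SG f hst hind
  set c : Fin m → Submodule (R0 SG) Q := fun i => (N i).comap Q.subtype with hcdef
  have hmapc : ∀ i, (c i).map Q.subtype = N i := by
    intro i
    rw [hcdef]
    rw [Submodule.map_comap_subtype]
    exact inf_eq_right.2 (hNle i)
  refine hn m c (fun i => ?_) ?_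
  · intro hbot
    apply hne i
    ext x
    simp only [AddSubgroup.mem_bot]
    constructor
    · intro hx
      have hxQ : x ∈ Q := hP (hle i hx)
      have : (⟨x, hxQ⟩ : Q) ∈ c i := by
        rw [hcdef]; exact hx
      rw [hbot] at this
      simpa using congrArg Subtype.val (Submodule.mem_bot _ |>.1 this)
    · rintro rfl; exact zero_mem _
  · intro i
    rw [disjoint_iff, eq_bot_iff]
    intro x hx
    have hx1 : (x : B) ∈ N i := by
      have := (Submodule.mem_inf.1 hx).1
      rw [hcdef] at this; exact this
    have hx2 : (x : B) ∈ (⨆ j, ⨆ _ : j ≠ i, N j) := by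
      have h2 := (Submodule.mem_inf.1 hx).2
      have : Q.subtype x ∈ (⨆ j, ⨆ _ : j ≠ i, c j).map Q.subtype :=
        Submodule.mem_map_of_mem h2
      simp only [Submodule.map_iSup] at this
      have heq : (⨆ j, ⨆ _ : j ≠ i, (c j).map Q.subtype) = ⨆ j, ⨆ _ : j ≠ i, N j := by
        refine iSup_congr fun j => iSup_congr fun _ => hmapc j
      rw [← heq]
      exact this
    have hbot : (x : B) ∈ (⊥ : Submodule (R0 SG) B) := by
      rw [← disjoint_iff.1 (hNind i)]
      exact ⟨hx1, hx2⟩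
    rw [Submodule.mem_bot] at hbot
    rw [Submodule.mem_bot]
    exact Subtype.ext hbot

lemma udim_mono {W W' : AddSubgroup B} (h : W ≤ W') (hbdd : BddAbove (Sset SG W')) :
    SG.udim W ≤ SG.udim W' := by
  rw [udim_eq_sSup_Sset, udim_eq_sSup_Sset]
  refine csSup_le_csSup hbdd ⟨0, zero_mem_Sset SG W⟩ ?_
  rintro m ⟨f, hne, hle, hst, hind⟩
  exact ⟨f, hne, fun i => (hle i).trans h, hst, hind⟩

lemma one_le_udim {W : AddSubgroup B} (hW : W ≠ ⊥) (hst : SG.IsB0Stable W)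
    (hbdd : BddAbove (Sset SG W)) : 1 ≤ SG.udim W := by
  rw [udim_eq_sSup_Sset]
  refine le_csSup hbdd ?_
  refine ⟨fun _ => W, fun _ => hW, fun _ => le_rfl, fun _ => hst, fun i => ?_⟩
  have : (⨆ j, ⨆ _ : j ≠ i, W) = (⊥ : AddSubgroup B) := by
    refine le_antisymm (iSup_le fun j => iSup_le fun hj => absurd (Subsingleton.elim j i) hj)
      bot_le
  rw [this]
  exact disjoint_bot_right


section Frames
variable {k : ℕ} (v : Fin k → B)

lemma framePow_def (m : ℕ) : SG.framePow v m = SG.b0Span {y : B | ∃ w : Fin m → B,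
    (∀ j, w j ∈ SG.b0Span (Set.range v)) ∧ y = (List.ofFn w).prod} := rfl

lemma isB0Stable_framePow (m : ℕ) : SG.IsB0Stable (SG.framePow v m) := by
  rw [framePow_def]; exact isB0Stable_b0Span SG _

lemma prod_mem_framePow {m : ℕ} (w : Fin m → B) (hw : ∀ j, w j ∈ SG.b0Span (Set.range v)) :
    (List.ofFn w).prod ∈ SG.framePow v m := by
  rw [framePow_def]
  exact subset_b0Span SG _ ⟨w, hw, rfl⟩

lemma one_mem_framePow_zero : (1 : B) ∈ SG.framePow v 0 := by
  have h := prod_mem_framePow SG v Fin.elim0 (fun j => j.elim0)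
  simpa using h

lemma comp0_le_framePow_zero {c : B} (hc : c ∈ SG.comp 0) : c ∈ SG.framePow v 0 := by
  have h := isB0Stable_framePow SG v 0 c hc 1 (one_mem_framePow_zero SG v)
  rwa [mul_one] at h

lemma one_mem_framePow (hv1 : (1 : B) ∈ SG.b0Span (Set.range v)) (m : ℕ) :
    (1 : B) ∈ SG.framePow v m := by
  have h := prod_mem_framePow SG v (fun _ : Fin m => (1 : B)) (fun _ => hv1)
  have he : (List.ofFn fun _ : Fin m => (1 : B)).prod = 1 := by
    rw [List.ofFn_const, List.prod_replicate, one_pow]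
  rwa [he] at h

lemma framePow_le_add (hv1 : (1 : B) ∈ SG.b0Span (Set.range v)) (a b : ℕ) :
    SG.framePow v a ≤ SG.framePow v (a + b) := by
  rw [framePow_def SG v a]
  refine b0Span_le SG (isB0Stable_framePow SG v _) ?_
  rintro y ⟨w, hw, rfl⟩
  set w' : Fin (a + b) → B := fun j => Fin.addCases (fun i => w i) (fun _ => (1 : B)) j with hw'
  have h1 : ∀ j, w' j ∈ SG.b0Span (Set.range v) := by
    intro j
    refine Fin.addCases (motive := fun j => w' j ∈ SG.b0Span (Set.range v)) ?_ ?_ j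
    · intro i; rw [hw']; simp only [Fin.addCases_left]; exact hw i
    · intro i; rw [hw']; simp only [Fin.addCases_right]; exact hv1
  have h2 := prod_mem_framePow SG v w' h1
  have he : (List.ofFn w').prod = (List.ofFn w).prod := by
    rw [List.ofFn_add, List.prod_append]
    have hl : (List.ofFn fun i : Fin a => w' (Fin.castAdd b i)) = List.ofFn w := by
      refine congrArg List.ofFn (funext fun i => ?_)
      rw [hw']; simp [Fin.addCases_left]
    have hr : (List.ofFn fun i : Fin b => w' (Fin.natAdd a i)).prod = 1 := by
      have : (List.ofFn fun i : Fin b => w' (Fin.natAdd a i)) =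
          List.ofFn fun _ : Fin b => (1 : B) := by
        refine congrArg List.ofFn (funext fun i => ?_)
        rw [hw']; simp [Fin.addCases_right]
      rw [this, List.ofFn_const, List.prod_replicate, one_pow]
    erw [hl, hr, mul_one]
  rwa [he] at h2

lemma framePow_mono (hv1 : (1 : B) ∈ SG.b0Span (Set.range v)) {a b : ℕ} (h : a ≤ b) :
    SG.framePow v a ≤ SG.framePow v b := by
  obtain ⟨c, rfl⟩ := Nat.exists_eq_add_of_le h
  exact framePow_le_add SG v hv1 a c

lemma mul_mem_framePow {a b : ℕ} (hb : b ≠ 0) {x y : B}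
    (hx : x ∈ SG.framePow v a) (hy : y ∈ SG.framePow v b) :
    x * y ∈ SG.framePow v (a + b) := by
  have key : ∀ (u : Fin a → B), (∀ j, u j ∈ SG.b0Span (Set.range v)) →
      (List.ofFn u).prod * y ∈ SG.framePow v (a + b) := by
    intro u hu
    rw [framePow_def] at hy
    induction hy using AddSubgroup.closure_induction with
    | mem z hz =>
        obtain ⟨c, hc, wp, hwp, rfl⟩ := hz
        obtain ⟨z, hz, rfl⟩ := hwp
        obtain ⟨b', rfl⟩ := Nat.exists_eq_succ_of_ne_zero hb
        set z' : Fin (b' + 1) → B := Fin.cons (c * z 0) (fun i => z i.succ) with hz'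
        have hz'mem : ∀ j, z' j ∈ SG.b0Span (Set.range v) := by
          intro j
          refine Fin.cases ?_ ?_ j
          · rw [hz', Fin.cons_zero]
            exact isB0Stable_b0Span SG _ c hc _ (hz 0)
          · intro i; rw [hz', Fin.cons_succ]; exact hz i.succ
        have hz'list : List.ofFn z' = (c * z 0) :: List.ofFn (fun i => z i.succ) := by
          rw [hz', List.ofFn_succ]
          congr 1
        have hzlist : List.ofFn z = z 0 :: List.ofFn (fun i => z i.succ) := List.ofFn_succ
        have hprod : c * (List.ofFn z).prod = (List.ofFn z').prod := by
          rw [hz'list, hzlist, List.prod_cons, List.prod_cons, mul_assoc]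
        rw [hprod]
        set uz : Fin (a + (b' + 1)) → B := fun j => Fin.addCases (fun i => u i) (fun i => z' i) j
          with huz
        have huzmem : ∀ j, uz j ∈ SG.b0Span (Set.range v) := by
          intro j
          refine Fin.addCases (motive := fun j => uz j ∈ SG.b0Span (Set.range v)) ?_ ?_ j
          · intro i; rw [huz]; simp only [Fin.addCases_left]; exact hu i
          · intro i; rw [huz]; simp only [Fin.addCases_right]; exact hz'mem i
        have h2 := prod_mem_framePow SG v uz huzmem
        have he : (List.ofFn uz).prod = (List.ofFn u).prod * (List.ofFn z').prod := by
          rw [List.ofFn_add, List.prod_append]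
          congr 1
          · refine congrArg List.prod (congrArg List.ofFn (funext fun i => ?_))
            rw [huz]; exact Fin.addCases_left i
          · refine congrArg List.prod (congrArg List.ofFn (funext fun i => ?_))
            rw [huz]; simp [Fin.addCases_right]
        rwa [he] at h2
    | zero => show (List.ofFn u).prod * 0 ∈ _
              rw [mul_zero]; exact zero_mem _
    | add x1 x2 h1 h2 ih1 ih2 =>
        show (List.ofFn u).prod * (x1 + x2) ∈ _
        rw [mul_add]; exact add_mem ih1 ih2
    | neg x1 h1 ih =>
        show (List.ofFn u).prod * (-x1) ∈ _
        rw [mul_neg]; exact neg_mem ih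
  rw [framePow_def] at hx
  induction hx using AddSubgroup.closure_induction with
  | mem z hz =>
      obtain ⟨c, hc, wp, hwp, rfl⟩ := hz
      obtain ⟨u, hu, rfl⟩ := hwp
      rw [mul_assoc]
      exact isB0Stable_framePow SG v _ c hc _ (key u hu)
  | zero => show (0 : B) * y ∈ _
            rw [zero_mul]; exact zero_mem _
  | add x1 x2 h1 h2 ih1 ih2 =>
      show (x1 + x2) * y ∈ _
      rw [add_mul]; exact add_mem ih1 ih2
  | neg x1 h1 ih =>
      show (-x1) * y ∈ _
      rw [neg_mul]; exact neg_mem ih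


lemma prod_mem_framePow_mul {p : ℕ} (hp : p ≠ 0) :
    ∀ (m : ℕ) (z : Fin m → B), (∀ j, z j ∈ SG.framePow v p) →
      (List.ofFn z).prod ∈ SG.framePow v (p * m) := by
  intro m
  induction m with
  | zero =>
      intro z _
      have h0 : (List.ofFn z).prod = 1 := by simp
      rw [h0, Nat.mul_zero]
      exact one_mem_framePow_zero SG v
  | succ m ih =>
      intro z hz
      rw [List.ofFn_succ, List.prod_cons]
      rcases Nat.eq_zero_or_pos m with rfl | hm
      · have h0 : (List.ofFn fun i : Fin 0 => z i.succ).prod = 1 := by simp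
        rw [h0, mul_one, Nat.mul_one]
        exact hz 0
      · have h1 := ih (fun i => z i.succ) (fun i => hz i.succ)
        have h2 := mul_mem_framePow SG v (Nat.mul_ne_zero hp hm.ne') (hz 0) h1
        have he : p + p * m = p * (m + 1) := by ring
        rwa [he] at h2

lemma b0Span_range_le_framePow {k' : ℕ} (w : Fin k' → B) {p : ℕ}
    (hw : ∀ i, w i ∈ SG.framePow v p) :
    SG.b0Span (Set.range w) ≤ SG.framePow v p := by
  refine b0Span_le SG (isB0Stable_framePow SG v p) ?_
  rintro y ⟨i, rfl⟩
  exact hw i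

lemma framePow_le_framePow_mul {k' : ℕ} {w : Fin k' → B} {p : ℕ} (hp : p ≠ 0)
    (hwv : ∀ i, w i ∈ SG.framePow v p) (m : ℕ) :
    SG.framePow w m ≤ SG.framePow v (p * m) := by
  rw [framePow_def SG w m]
  refine b0Span_le SG (isB0Stable_framePow SG v _) ?_
  rintro y ⟨z, hzmem, rfl⟩
  refine prod_mem_framePow_mul SG v hp m z fun j => ?_
  exact b0Span_range_le_framePow SG v w hwv (hzmem j)

lemma b0Span_range_le_framePow_one :
    SG.b0Span (Set.range v) ≤ SG.framePow v 1 := by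
  refine b0Span_le SG (isB0Stable_framePow SG v 1) ?_
  rintro y ⟨i, rfl⟩
  rw [framePow_def]
  refine subset_b0Span SG _ ⟨fun _ => v i, fun _ => subset_b0Span SG _ ⟨i, rfl⟩, ?_⟩
  simp

lemma exists_mem_framePow (hv1 : (1 : B) ∈ SG.b0Span (Set.range v))
    (hgen : Subring.closure ((SG.comp 0 : Set B) ∪ Set.range v) = ⊤) (x : B) :
    ∃ p, x ∈ SG.framePow v p := by
  have hU : ∀ y ∈ Subring.closure ((SG.comp 0 : Set B) ∪ Set.range v),
      ∃ p, y ∈ SG.framePow v p := by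
    intro y hy
    induction hy using Subring.closure_induction with
    | mem z hz =>
        rcases hz with hz | hz
        · exact ⟨0, comp0_le_framePow_zero SG v hz⟩
        · obtain ⟨i, rfl⟩ := hz
          exact ⟨1, b0Span_range_le_framePow_one SG v (subset_b0Span SG _ ⟨i, rfl⟩)⟩
    | zero => exact ⟨0, zero_mem _⟩
    | one => exact ⟨0, one_mem_framePow_zero SG v⟩
    | add a b ha hb iha ihb =>
        obtain ⟨pa, hpa⟩ := iha
        obtain ⟨pb, hpb⟩ := ihb
        refine ⟨max pa pb, add_mem ?_ ?_⟩
        · exact framePow_mono SG v hv1 (le_max_left pa pb) hpa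
        · exact framePow_mono SG v hv1 (le_max_right pa pb) hpb
    | neg a ha iha =>
        obtain ⟨pa, hpa⟩ := iha
        exact ⟨pa, neg_mem hpa⟩
    | mul a b ha hb iha ihb =>
        obtain ⟨pa, hpa⟩ := iha
        obtain ⟨pb, hpb⟩ := ihb
        have hpb' : b ∈ SG.framePow v (max pb 1) :=
          framePow_mono SG v hv1 (le_max_left pb 1) hpb
        have hne : max pb 1 ≠ 0 := Nat.one_le_iff_ne_zero.1 (le_max_right pb 1)
        exact ⟨pa + max pb 1, mul_mem_framePow SG v hne hpa hpb'⟩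
  exact hU x (by rw [hgen]; trivial)


end Frames

section Filtration

/-- The filtration `B₀ ⊕ ⋯ ⊕ B_D`. -/
def Filt (D : ℕ) : AddSubgroup B := ⨆ n ∈ Set.Iic D, SG.comp n

lemma comp_le_Filt {n D : ℕ} (h : n ≤ D) : SG.comp n ≤ Filt SG D :=
  le_iSup₂ (f := fun n (_ : n ∈ Set.Iic D) => SG.comp n) n h

lemma Filt_mono {D D' : ℕ} (h : D ≤ D') : Filt SG D ≤ Filt SG D' :=
  iSup₂_le fun n hn => comp_le_Filt SG (le_trans hn h)

lemma mem_Filt_of_biSup {m D : ℕ} (h : m ≤ D) {x : B}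
    (hx : x ∈ ⨆ k ∈ Set.Iic m, SG.comp k) : x ∈ Filt SG D := by
  have hle : (⨆ k ∈ Set.Iic m, SG.comp k) ≤ Filt SG D :=
    iSup₂_le fun l hl => comp_le_Filt SG (le_trans hl h)
  exact hle hx

lemma isB0Stable_Filt (D : ℕ) : SG.IsB0Stable (Filt SG D) := by
  intro c hc w hw
  rw [Filt, iSup_subtype'] at hw
  refine AddSubgroup.iSup_induction (C := fun w => c * w ∈ Filt SG D) _ hw
    (fun n x hx => ?_) ?_ (fun x y hx hy => ?_)
  · refine mem_Filt_of_biSup SG ?_ (SG.mul_mem 0 n.1 c hc x hx)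
    rw [Nat.zero_add]
    exact Set.mem_Iic.1 n.2
  · show c * 0 ∈ Filt SG D
    rw [mul_zero]; exact zero_mem _
  · show c * (x + y) ∈ Filt SG D
    rw [mul_add]; exact add_mem hx hy

lemma mul_mem_Filt {a b : ℕ} {x y : B} (hx : x ∈ Filt SG a) (hy : y ∈ Filt SG b) :
    x * y ∈ Filt SG (a + b) := by
  rw [Filt, iSup_subtype'] at hx
  refine AddSubgroup.iSup_induction (C := fun x => x * y ∈ Filt SG (a + b)) _ hx
    (fun n xx hxx => ?_) ?_ (fun x1 x2 h1 h2 => ?_)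
  · rw [Filt, iSup_subtype'] at hy
    refine AddSubgroup.iSup_induction (C := fun y => xx * y ∈ Filt SG (a + b)) _ hy
      (fun m yy hyy => ?_) ?_ (fun y1 y2 h1 h2 => ?_)
    · exact mem_Filt_of_biSup SG (add_le_add (Set.mem_Iic.1 n.2) (Set.mem_Iic.1 m.2)) (SG.mul_mem n.1 m.1 xx hxx yy hyy)
    · show xx * 0 ∈ _
      rw [mul_zero]; exact zero_mem _
    · show xx * (y1 + y2) ∈ _
      rw [mul_add]; exact add_mem h1 h2
  · show (0 : B) * y ∈ _
    rw [zero_mul]; exact zero_mem _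
  · show (x1 + x2) * y ∈ _
    rw [add_mul]; exact add_mem h1 h2

lemma prod_mem_Filt {d : ℕ} : ∀ (m : ℕ) (z : Fin m → B), (∀ j, z j ∈ Filt SG d) →
    (List.ofFn z).prod ∈ Filt SG (d * m) := by
  intro m
  induction m with
  | zero =>
      intro z _
      have h0 : (List.ofFn z).prod = 1 := by simp
      rw [h0, Nat.mul_zero]
      exact comp_le_Filt SG le_rfl SG.one_mem'
  | succ m ih =>
      intro z hz
      rw [List.ofFn_succ, List.prod_cons]
      have h1 := ih (fun i => z i.succ) (fun i => hz i.succ)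
      have h2 := mul_mem_Filt SG (hz 0) h1
      have he : d + d * m = d * (m + 1) := by ring
      rwa [he] at h2

lemma framePow_le_Filt {k : ℕ} (v : Fin k → B) {d : ℕ} (hv : ∀ i, v i ∈ Filt SG d) (j : ℕ) :
    SG.framePow v j ≤ Filt SG (d * j) := by
  rw [framePow_def]
  refine b0Span_le SG (isB0Stable_Filt SG _) ?_
  rintro y ⟨z, hz, rfl⟩
  refine prod_mem_Filt SG j z fun i => ?_
  refine b0Span_le SG (isB0Stable_Filt SG d) ?_ (hz i)
  rintro y ⟨i', rfl⟩
  exact hv i'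

lemma mem_iSup_comp (x : B) : x ∈ ⨆ n, SG.comp n := by
  obtain ⟨a, rfl⟩ := SG.internal.surjective x
  induction a using DirectSum.induction_on with
  | zero => rw [map_zero]; exact zero_mem _
  | of i y => rw [DirectSum.coeAddMonoidHom_of]; exact AddSubgroup.mem_iSup_of_mem i y.2
  | add a b ha hb => rw [map_add]; exact add_mem ha hb

lemma exists_mem_Filt (x : B) : ∃ D, x ∈ Filt SG D := by
  have hx : x ∈ ⨆ n, SG.comp n := mem_iSup_comp SG x
  refine AddSubgroup.iSup_induction (C := fun x => ∃ D, x ∈ Filt SG D) _ hx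
    (fun n y hy => ⟨n, comp_le_Filt SG le_rfl hy⟩) ⟨0, zero_mem _⟩ (fun x y hx' hy' => ?_)
  obtain ⟨Dx, hDx⟩ := hx'
  obtain ⟨Dy, hDy⟩ := hy'
  exact ⟨max Dx Dy, add_mem (Filt_mono SG (le_max_left Dx Dy) hDx)
    (Filt_mono SG (le_max_right Dx Dy) hDy)⟩

lemma Filt_le_span (hfree : ∀ n, ∃ (k : ℕ) (w : Fin k → B), SG.IsComp0Basis n w) (D : ℕ) :
    ∃ s : Set B, s.Finite ∧ (Filt SG D : Set B) ⊆ (Submodule.span (R0 SG) s : Set B) := by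
  choose kk ww hww using hfree
  refine ⟨⋃ n ∈ Set.Iic D, Set.range (ww n), ?_, ?_⟩
  · exact Set.Finite.biUnion (Set.finite_Iic D) fun n _ => Set.finite_range _
  · intro x hx
    have hle : Filt SG D ≤
        (Submodule.span (R0 SG) (⋃ n ∈ Set.Iic D, Set.range (ww n))).toAddSubgroup := by
      refine iSup₂_le fun n hn => ?_
      intro b hb
      obtain ⟨c, ⟨hc, hrep⟩, -⟩ := (hww n).2 b hb
      rw [hrep]
      refine Submodule.sum_mem _ fun i _ => ?_
      have hsm : c i * ww n i = (⟨c i, hc i⟩ : R0 SG) • ww n i := rfl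
      rw [hsm]
      exact Submodule.smul_mem _ _ (Submodule.subset_span (Set.mem_biUnion hn ⟨i, rfl⟩))
    exact hle hx

lemma bddAbove_Sset_framePow
    (hnoeth : ∀ c : ℕ →o AddSubgroup B,
      (∀ m, c m ≤ SG.comp 0 ∧ SG.IsB0Stable (c m)) → ∃ N, ∀ m, N ≤ m → c m = c N)
    (hfree : ∀ n, ∃ (k : ℕ) (w : Fin k → B), SG.IsComp0Basis n w)
    {k : ℕ} (v : Fin k → B) (j : ℕ) :
    BddAbove (Sset SG (SG.framePow v j)) := by
  have hvF : ∀ i, ∃ D, v i ∈ Filt SG D := fun i => exists_mem_Filt SG (v i)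
  choose d hd using hvF
  have hvD : ∀ i, v i ∈ Filt SG (Finset.univ.sup d) :=
    fun i => Filt_mono SG (Finset.le_sup (Finset.mem_univ i)) (hd i)
  have hFP := framePow_le_Filt SG v hvD j
  obtain ⟨s, hsfin, hsub⟩ := Filt_le_span SG hfree (Finset.univ.sup d * j)
  exact bddAbove_Sset SG hnoeth hsfin fun x hx => hsub (hFP hx)

end Filtration
end Bridge

section Analysis
open Filter Real

lemma key_limsup {a b : ℕ → ℕ} {p : ℕ} (hp : 1 ≤ p)
    (hb : ∀ m, b m ≤ a (p * m)) (ha1 : ∀ m, 1 ≤ a m) :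
    Filter.limsup (fun m : ℕ => ((Real.logb m (b m) : ℝ) : EReal)) Filter.atTop ≤
      Filter.limsup (fun m : ℕ => ((Real.logb m (a m) : ℝ) : EReal)) Filter.atTop := by
  set L := Filter.limsup (fun m : ℕ => ((Real.logb m (a m) : ℝ) : EReal)) Filter.atTop with hL
  set u2 : ℕ → EReal := fun m => ((Real.logb m (a (p * m)) : ℝ) : EReal) with hu2
  have step1 : Filter.limsup (fun m : ℕ => ((Real.logb m (b m) : ℝ) : EReal)) Filter.atTop ≤
      Filter.limsup u2 Filter.atTop := by
    refine Filter.limsup_le_limsup ?_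
    filter_upwards [Filter.eventually_ge_atTop 2] with m hm
    rw [hu2, EReal.coe_le_coe_iff]
    have hm1 : (1 : ℝ) < (m : ℝ) := by exact_mod_cast hm
    have hapos : (0 : ℝ) < (a (p * m) : ℝ) := by exact_mod_cast ha1 (p * m)
    rcases Nat.eq_zero_or_pos (b m) with hbm | hbm
    · rw [hbm]
      simp only [Nat.cast_zero, Real.logb_zero]
      refine Real.logb_nonneg hm1 ?_
      exact_mod_cast ha1 (p * m)
    · refine (Real.logb_le_logb hm1 (by exact_mod_cast hbm) hapos).2 ?_
      exact_mod_cast hb m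
  have hL0 : (0 : EReal) ≤ L := by
    refine Filter.le_limsup_of_frequently_le ?_
    refine ((Filter.eventually_ge_atTop 2).mono fun m hm => ?_).frequently
    have hm1 : (1 : ℝ) < (m : ℝ) := by exact_mod_cast hm
    have h0 : (0 : ℝ) ≤ Real.logb m (a m) := Real.logb_nonneg hm1 (by exact_mod_cast ha1 m)
    exact_mod_cast h0
  have step2 : Filter.limsup u2 Filter.atTop ≤ L := by
    by_contra hcon
    push_neg at hcon
    obtain ⟨c, hc1, hc2⟩ := exists_between hcon
    have hctop : c ≠ ⊤ := (lt_of_lt_of_le hc2 le_top).ne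
    have hcpos : (0 : EReal) < c := lt_of_le_of_lt hL0 hc1
    have hcbot : c ≠ ⊥ := (lt_trans (by simp : (⊥ : EReal) < 0) hcpos).ne'
    set cr := c.toReal with hcrdef
    have hcre : (cr : EReal) = c := EReal.coe_toReal hctop hcbot
    have hcrpos : 0 < cr := EReal.coe_pos.1 (by rw [hcre]; exact hcpos)
    have hev : ∀ᶠ m : ℕ in Filter.atTop, ((Real.logb m (a m) : ℝ) : EReal) < c :=
      Filter.eventually_lt_of_limsup_lt hc1
    obtain ⟨N₀, hN₀⟩ := Filter.eventually_atTop.1 hev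
    have hbound : ∀ᶠ m : ℕ in Filter.atTop,
        u2 m ≤ ((cr + cr * Real.log p / Real.log m : ℝ) : EReal) := by
      filter_upwards [Filter.eventually_ge_atTop (max 2 N₀)] with m hm
      have hm2 : 2 ≤ m := le_trans (le_max_left _ _) hm
      have hmN : N₀ ≤ m := le_trans (le_max_right _ _) hm
      have hmle : m ≤ p * m := Nat.le_mul_of_pos_left m hp
      have hpm2 : 2 ≤ p * m := le_trans hm2 hmle
      have hpmN : N₀ ≤ p * m := le_trans hmN hmle
      have hm1 : (1 : ℝ) < (m : ℝ) := by exact_mod_cast hm2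
      have hlogm : 0 < Real.log m := Real.log_pos hm1
      have hppos : (0 : ℝ) < (p : ℝ) := by exact_mod_cast hp
      have hmpos : (0 : ℝ) < (m : ℝ) := lt_trans one_pos hm1
      have hpm1 : (1 : ℝ) < ((p * m : ℕ) : ℝ) := by exact_mod_cast hpm2
      have hlogpm : 0 < Real.log ((p * m : ℕ) : ℝ) := Real.log_pos hpm1
      have h1 : Real.logb ((p * m : ℕ) : ℝ) ((a (p * m) : ℕ) : ℝ) < cr := by
        have h := hN₀ (p * m) hpmN
        rw [← hcre] at h
        exact_mod_cast h
      have h2 : Real.log ((a (p * m) : ℕ) : ℝ) ≤ cr * Real.log ((p * m : ℕ) : ℝ) := by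
        rw [← Real.log_div_log] at h1
        exact le_of_lt ((div_lt_iff₀ hlogpm).1 h1)
      have hsplit : Real.log ((p * m : ℕ) : ℝ) = Real.log p + Real.log m := by
        rw [Nat.cast_mul]
        exact Real.log_mul (ne_of_gt hppos) (ne_of_gt hmpos)
      rw [hu2, EReal.coe_le_coe_iff, ← Real.log_div_log, div_le_iff₀ hlogm]
      calc Real.log ((a (p * m) : ℕ) : ℝ) ≤ cr * (Real.log p + Real.log m) := by
            rw [← hsplit]; exact h2
      _ = (cr + cr * Real.log p / Real.log m) * Real.log m := by
            field_simp
            ring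
    have hlim : Filter.Tendsto (fun m : ℕ => ((cr + cr * Real.log p / Real.log m : ℝ) : EReal))
        Filter.atTop (nhds (cr : EReal)) := by
      rw [EReal.tendsto_coe]
      have hlog : Filter.Tendsto (fun m : ℕ => Real.log m) Filter.atTop Filter.atTop :=
        Real.tendsto_log_atTop.comp tendsto_natCast_atTop_atTop
      have h0 : Filter.Tendsto (fun m : ℕ => cr * Real.log p / Real.log m)
          Filter.atTop (nhds 0) := Filter.Tendsto.div_atTop tendsto_const_nhds hlog
      have hadd := Filter.Tendsto.add (tendsto_const_nhds (x := cr)) h0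
      simpa using hadd
    have hfin : Filter.limsup u2 Filter.atTop ≤ (cr : EReal) := by
      refine le_trans (Filter.limsup_le_limsup hbound) ?_
      rw [hlim.limsup_eq]
    rw [hcre] at hfin
    exact absurd (lt_of_lt_of_le hc2 hfin) (lt_irrefl c)
  exact step1.trans step2

end Analysis
end FSGAux
/-- Let `B` be an FSG ring whose `B_0` is a left noetherian domain and let `V` be a
generating frame of `B`.  Then `GGKdim(B) = limsup_{m→∞} log_m (udim V^m)`; in
particular this value does not depend on the generating frame `V`. -/
theorem ggkdim_eq_of_generating_frame [Nontrivial B] (F : FinitelySemiGraded B)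
    (hdom : ∀ a ∈ F.comp 0, ∀ b ∈ F.comp 0, a * b = 0 → a = 0 ∨ b = 0)
    (hnoeth : ∀ c : ℕ →o AddSubgroup B,
      (∀ m, c m ≤ F.comp 0 ∧ F.toSemiGraded.IsB0Stable (c m)) →
      ∃ N, ∀ m, N ≤ m → c m = c N)
    {k : ℕ} (v : Fin k → B) (hv : F.toSemiGraded.IsFrame v)
    (hgen : Subring.closure ((F.comp 0 : Set B) ∪ Set.range v) = ⊤) :
    F.toSemiGraded.GGKdim =
      Filter.limsup
        (fun m : ℕ =>
          ((Real.logb m (F.toSemiGraded.udim (F.toSemiGraded.framePow v m)) : ℝ) : EReal))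
        Filter.atTop := by
  classical
  have hfree := F.free
  have hv1 : (1 : B) ∈ F.toSemiGraded.b0Span (Set.range v) := hv.2
  apply le_antisymm
  · rw [SemiGraded.GGKdim]
    refine iSup_le fun k' => iSup_le fun w => iSup_le fun hw => ?_
    have hwp : ∀ i, ∃ p, w i ∈ F.toSemiGraded.framePow v p := fun i =>
      FSGAux.exists_mem_framePow F.toSemiGraded v hv1 hgen (w i)
    choose pf hpf using hwp
    set p : ℕ := max (Finset.univ.sup pf) 1 with hpdef
    have hp1 : 1 ≤ p := le_max_right _ _
    have hp0 : p ≠ 0 := Nat.one_le_iff_ne_zero.1 hp1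
    have hwv : ∀ i, w i ∈ F.toSemiGraded.framePow v p := fun i =>
      FSGAux.framePow_mono F.toSemiGraded v hv1
        (le_trans (Finset.le_sup (Finset.mem_univ i)) (le_max_left _ _)) (hpf i)
    have hb : ∀ m, F.toSemiGraded.udim (F.toSemiGraded.framePow w m) ≤
        F.toSemiGraded.udim (F.toSemiGraded.framePow v (p * m)) := by
      intro m
      refine FSGAux.udim_mono F.toSemiGraded
        (FSGAux.framePow_le_framePow_mul F.toSemiGraded v hp0 hwv m) ?_
      exact FSGAux.bddAbove_Sset_framePow F.toSemiGraded hnoeth hfree v (p * m)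
    have ha1 : ∀ m, 1 ≤ F.toSemiGraded.udim (F.toSemiGraded.framePow v m) := by
      intro m
      refine FSGAux.one_le_udim F.toSemiGraded ?_
        (FSGAux.isB0Stable_framePow F.toSemiGraded v m)
        (FSGAux.bddAbove_Sset_framePow F.toSemiGraded hnoeth hfree v m)
      intro hbot
      have h1 : (1 : B) ∈ F.toSemiGraded.framePow v m :=
        FSGAux.one_mem_framePow F.toSemiGraded v hv1 m
      rw [hbot] at h1
      exact one_ne_zero (AddSubgroup.mem_bot.1 h1)
    exact FSGAux.key_limsup (a := fun m => F.toSemiGraded.udim (F.toSemiGraded.framePow v m))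
      (b := fun m => F.toSemiGraded.udim (F.toSemiGraded.framePow w m)) hp1 hb ha1
  · rw [SemiGraded.GGKdim]
    exact le_iSup_of_le k (le_iSup_of_le v (le_iSup_of_le hv le_rfl))
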